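/- arXiv:2509.11852 — 4 statements merged into one kernel-verified Lean document; each statement's English description precedes it below -/
import Mathlib

section
/- Let X be a normed space and T an invertible continuous linear operator. The following are equivalent: (i) for every ε > 0 there is δ > 0 such that every periodic δ-pseudotrajectory of T is contained in B(0, ε); (ii) for every ε > 0 there is δ > 0 such that every periodic δ-pseudotrajectory of T containing 0 as a term is contained in B(0, ε). -/
lemma aux_per {α : Type*} (x : ℤ → α) (p : ℕ) (h : ∀ j, x (j + p) = x j) :
    ∀ (m : ℤ) (j : ℤ), x (j + m * p) = x j := by
  intro m
  induction m using Int.induction_on with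
  | zero => intro j; simp
  | succ n ih =>
      intro j
      have h1 : j + ((n : ℤ) + 1) * p = (j + n * p) + p := by ring
      rw [h1, h, ih]
  | pred n ih =>
      intro j
      have h2 := h (j + (-(n : ℤ) - 1) * p)
      have h1 : j + (-(n : ℤ) - 1) * p + (p : ℤ) = j + (-(n : ℤ)) * p := by ring
      rw [h1] at h2
      rw [← h2]
      exact ih j

lemma aux_red {α : Type*} (x : ℤ → α) (p : ℕ) (hp : 0 < p) (h : ∀ j, x (j + p) = x j)
    (j : ℤ) : ∃ n : ℕ, n < p ∧ x j = x n := by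
  have hp' : (0 : ℤ) < p := by exact_mod_cast hp
  refine ⟨(j % (p : ℤ)).toNat, ?_, ?_⟩
  · have h1 : j % (p : ℤ) < p := Int.emod_lt_of_pos j hp'
    have h2 : 0 ≤ j % (p : ℤ) := Int.emod_nonneg j (by positivity)
    omega
  · have h2 : 0 ≤ j % (p : ℤ) := Int.emod_nonneg j (by positivity)
    have h3 : ((((j % (p : ℤ)).toNat) : ℤ)) = j % (p : ℤ) := Int.toNat_of_nonneg h2
    have h4 : x j = x (j % (p : ℤ)) := by
      conv_lhs => rw [show j = j % (p : ℤ) + (j / (p : ℤ)) * p by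
        rw [mul_comm]; exact (Int.emod_add_mul_ediv j p).symm]
      exact aux_per x p h _ _
    rw [h4, h3]

lemma min1_lip (u v : ℝ) : |min 1 u - min 1 v| ≤ |u - v| := by
  rcases le_total 1 u with hu | hu <;> rcases le_total 1 v with hv | hv <;>
    simp only [min_eq_left, min_eq_right, hu, hv, abs_sub_le_iff] <;>
    constructor <;> nlinarith [le_abs_self (u - v), neg_abs_le (u - v)]

/-- For an invertible continuous linear operator `T` on a normed space, the following are
equivalent: (i) for every `ε > 0` there is `δ > 0` such that every periodic
`δ`-pseudotrajectory of `T` is contained in `B(0, ε)`; (ii) the same with the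
pseudotrajectories restricted to those containing `0` as a term. -/
theorem stmt12 {X : Type*} [NormedAddCommGroup X] [NormedSpace ℝ X]
    (T : X ≃L[ℝ] X) :
    (∀ ε > (0 : ℝ), ∃ δ > (0 : ℝ), ∀ x : ℤ → X,
      (∀ j : ℤ, ‖T (x j) - x (j + 1)‖ < δ) →
      (∃ p : ℕ, 1 ≤ p ∧ ∀ j : ℤ, x (j + p) = x j) →
      ∀ j : ℤ, ‖x j‖ < ε)
    ↔
    (∀ ε > (0 : ℝ), ∃ δ > (0 : ℝ), ∀ x : ℤ → X,
      (∀ j : ℤ, ‖T (x j) - x (j + 1)‖ < δ) →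
      (∃ p : ℕ, 1 ≤ p ∧ ∀ j : ℤ, x (j + p) = x j) →
      (∃ j : ℤ, x j = 0) →
      ∀ j : ℤ, ‖x j‖ < ε) := by
  constructor
  · intro h ε hε
    obtain ⟨δ, hδ, hδ'⟩ := h ε hε
    exact ⟨δ, hδ, fun x hx hper _ => hδ' x hx hper⟩
  · intro h ε hε
    obtain ⟨δ, hδ, hδ'⟩ := h ε hε
    refine ⟨δ, hδ, ?_⟩
    rintro x hx ⟨p, hp, hper⟩
    have hp0 : 0 < p := hp
    have hne : (Finset.range p).Nonempty := Finset.nonempty_range_iff.mpr (by omega)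
    set e : ℝ := (Finset.range p).sup' hne (fun n => ‖T (x n) - x (n + 1)‖) with he_def
    set M : ℝ := (Finset.range p).sup' hne (fun n => ‖x n‖) with hM_def
    have heδ : e < δ := by
      rw [he_def, Finset.sup'_lt_iff]
      intro n _; exact hx n
    have hE : ∀ j : ℤ, ‖T (x j) - x (j + 1)‖ ≤ e := by
      intro j
      have hEper : ∀ j : ℤ, (fun j : ℤ => ‖T (x j) - x (j + 1)‖) (j + p) =
          (fun j : ℤ => ‖T (x j) - x (j + 1)‖) j := by
        intro j; simp only
        rw [hper, show j + (p : ℤ) + 1 = (j + 1) + p by ring, hper]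
      obtain ⟨n, hn, hn'⟩ := aux_red (fun j : ℤ => ‖T (x j) - x (j + 1)‖) p hp0 hEper j
      rw [hn', he_def]
      exact Finset.le_sup' (fun n : ℕ => ‖T (x n) - x (n + 1)‖) (Finset.mem_range.mpr hn)
    have hMx : ∀ j : ℤ, ‖x j‖ ≤ M := by
      intro j
      obtain ⟨n, hn, hn'⟩ := aux_red (fun j : ℤ => ‖x j‖) p hp0 (fun j => by simp [hper j]) j
      rw [hn', hM_def]
      exact Finset.le_sup' (fun n : ℕ => ‖x n‖) (Finset.mem_range.mpr hn)
    have hM0 : 0 ≤ M := le_trans (norm_nonneg _) (hMx 0)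
    obtain ⟨K, hK⟩ := exists_nat_gt (M / (δ - e))
    set N : ℕ := (K + 1) * p with hN_def
    have hN1 : 1 ≤ N := Nat.one_le_iff_ne_zero.mpr (by positivity)
    have hNR : (0 : ℝ) < N := by exact_mod_cast hN1
    have hNM : M < (N : ℝ) * (δ - e) := by
      have h1 : M / (δ - e) < (N : ℝ) := by
        have h2 : K ≤ N := by
          calc K ≤ (K + 1) * 1 := by omega
          _ ≤ (K + 1) * p := Nat.mul_le_mul_left _ hp
        have h3 : (K : ℝ) ≤ (N : ℝ) := by exact_mod_cast h2
        linarith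
      have := (div_lt_iff₀ (by linarith : (0:ℝ) < δ - e)).mp h1
      linarith [this]
    set L : ℕ := p + 2 * N with hL_def
    have hL3 : 3 ≤ L := by omega
    have hLR : (0 : ℤ) < (L : ℤ) := by exact_mod_cast (by omega : 0 < L)
    set c : ℝ := (p : ℝ) + N with hc_def
    set t : ℤ → ℝ := fun j => min 1 (|((j % (L : ℤ) : ℤ) : ℝ) - c| / N) with ht_def
    have ht0' : ∀ j, 0 ≤ t j := fun j => le_min zero_le_one (by positivity)
    have ht1' : ∀ j, t j ≤ 1 := fun j => min_le_left _ _
    have htper : ∀ j, t (j + (L : ℤ)) = t j := by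
      intro j
      simp only [ht_def]
      rw [show j + (L : ℤ) = j + (L : ℤ) * 1 by ring, Int.add_mul_emod_self_left]
    have ht0 : t ((p : ℤ) + (N : ℤ)) = 0 := by
      have hmod : ((p : ℤ) + N) % (L : ℤ) = (p : ℤ) + N := by
        apply Int.emod_eq_of_lt (by positivity)
        push_cast [hL_def]; omega
      simp only [ht_def, hmod]
      rw [show (((p : ℤ) + (N : ℤ) : ℤ) : ℝ) - c = 0 by push_cast [hc_def]; ring]
      simp
    have ht1 : ∀ n : ℕ, n < p → t (n : ℤ) = 1 := by
      intro n hn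
      have hmod : ((n : ℤ)) % (L : ℤ) = (n : ℤ) := by
        apply Int.emod_eq_of_lt (by positivity)
        exact_mod_cast (by omega : n < L)
      simp only [ht_def, hmod]
      rw [min_eq_left]
      rw [le_div_iff₀ hNR, one_mul]
      have hnp : (n : ℝ) + 1 ≤ (p : ℝ) := by exact_mod_cast hn
      rw [abs_of_nonpos (by push_cast [hc_def]; linarith)]
      push_cast [hc_def]
      linarith
    have htlip : ∀ j, |t j - t (j + 1)| ≤ 1 / (N : ℝ) := by
      intro j
      set m : ℤ := j % (L : ℤ) with hm_def
      have hm0 : 0 ≤ m := Int.emod_nonneg j (by omega)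
      have hm1 : m < (L : ℤ) := Int.emod_lt_of_pos j hLR
      have h1L : (1 : ℤ) % (L : ℤ) = 1 :=
        Int.emod_eq_of_lt (by norm_num) (by exact_mod_cast (by omega : 1 < L))
      have hstep : (j + 1) % (L : ℤ) = (m + 1) % (L : ℤ) := by
        rw [Int.add_emod, h1L, ← hm_def]
      by_cases hcase : m + 1 < (L : ℤ)
      · have hmod2 : (j + 1) % (L : ℤ) = m + 1 := by
          rw [hstep]; exact Int.emod_eq_of_lt (by omega) hcase
        simp only [ht_def, ← hm_def, hmod2]
        refine (min1_lip _ _).trans ?_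
        rw [div_sub_div_same, abs_div, abs_of_pos hNR]
        gcongr
        calc |(|((m : ℤ) : ℝ) - c| - |((m + 1 : ℤ) : ℝ) - c|)|
            ≤ |(((m : ℤ) : ℝ) - c) - (((m + 1 : ℤ) : ℝ) - c)| := abs_abs_sub_abs_le_abs_sub _ _
          _ = 1 := by
              rw [show (((m : ℤ) : ℝ) - c) - (((m + 1 : ℤ) : ℝ) - c) = -1 by push_cast; ring,
                abs_neg, abs_one]
      · have hm : m = (L : ℤ) - 1 := by omega
        have hmod2 : (j + 1) % (L : ℤ) = 0 := by
          rw [hstep, show m + 1 = (L : ℤ) by omega, Int.emod_self]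
        simp only [ht_def, ← hm_def, hmod2, hm]
        have hu : |(((L : ℤ) - 1 : ℤ) : ℝ) - c| / (N : ℝ) = 1 - 1 / (N : ℝ) := by
          have h1N : (1 : ℝ) ≤ (N : ℝ) := by exact_mod_cast hN1
          rw [show (((L : ℤ) - 1 : ℤ) : ℝ) - c = (N : ℝ) - 1 by push_cast [hL_def, hc_def]; ring,
            abs_of_nonneg (by linarith)]
          field_simp
        have hv : 1 ≤ |((0 : ℤ) : ℝ) - c| / (N : ℝ) := by
          rw [show ((0 : ℤ) : ℝ) - c = -((p : ℝ) + N) by push_cast [hc_def]; ring, abs_neg,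
            abs_of_nonneg (by positivity), le_div_iff₀ hNR, one_mul]
          have hp' : (0 : ℝ) ≤ (p : ℝ) := by positivity
          linarith
        rw [hu, min_eq_right (by have := one_div_pos.mpr hNR; linarith), min_eq_left hv,
          show 1 - 1 / (N : ℝ) - 1 = -(1 / (N : ℝ)) by ring, abs_neg,
          abs_of_nonneg (by positivity)]
    -- the spliced trajectory
    set y : ℤ → X := fun j => t j • x j with hy_def
    have hxL : ∀ j, x (j + (L : ℤ)) = x j := by
      intro j
      have h2 := aux_per x p hper (2 * (K : ℤ) + 3) j
      rwa [show j + (2 * (K : ℤ) + 3) * p = j + (L : ℤ) by push_cast [hL_def, hN_def]; ring] at h2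
    have hyerr : ∀ j : ℤ, ‖T (y j) - y (j + 1)‖ < δ := by
      intro j
      have hexp : T (y j) - y (j + 1)
          = t j • (T (x j) - x (j + 1)) + (t j - t (j + 1)) • x (j + 1) := by
        simp only [hy_def, map_smul, smul_sub, sub_smul]
        abel
      rw [hexp]
      have h1 : ‖t j • (T (x j) - x (j + 1))‖ ≤ e := by
        rw [norm_smul, Real.norm_eq_abs, abs_of_nonneg (ht0' j)]
        calc t j * ‖T (x j) - x (j + 1)‖ ≤ 1 * e :=
              mul_le_mul (ht1' j) (hE j) (norm_nonneg _) zero_le_one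
          _ = e := one_mul e
      have h2 : ‖(t j - t (j + 1)) • x (j + 1)‖ ≤ (1 / (N : ℝ)) * M := by
        rw [norm_smul, Real.norm_eq_abs]
        exact mul_le_mul (htlip j) (hMx (j + 1)) (norm_nonneg _) (by positivity)
      have h3 : (1 / (N : ℝ)) * M < δ - e := by
        rw [div_mul_eq_mul_div, one_mul, div_lt_iff₀ hNR]
        linarith [hNM]
      calc ‖t j • (T (x j) - x (j + 1)) + (t j - t (j + 1)) • x (j + 1)‖
          ≤ ‖t j • (T (x j) - x (j + 1))‖ + ‖(t j - t (j + 1)) • x (j + 1)‖ := norm_add_le _ _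
        _ < δ := by linarith
    have hyper : ∀ j, y (j + (L : ℤ)) = y j := by
      intro j
      simp only [hy_def, htper, hxL]
    have hy0 : y ((p : ℤ) + (N : ℤ)) = 0 := by
      simp only [hy_def, ht0, zero_smul]
    have hy := hδ' y hyerr ⟨L, by omega, hyper⟩ ⟨(p : ℤ) + (N : ℤ), hy0⟩
    intro j
    obtain ⟨n, hn, hn'⟩ := aux_red x p hp0 hper j
    rw [hn']
    have h4 := hy (n : ℤ)
    rwa [hy_def, show (fun j => t j • x j) (n : ℤ) = t (n : ℤ) • x (n : ℤ) from rfl,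
      ht1 n hn, one_smul] at h4
end

section
/- Let B_w be the bilateral weighted backward shift on c0(ℤ) (or ℓp(ℤ)) with weights w(k) = 1/2 for k ≥ 0 and w(k) = 1 for k < 0. Then B_w does not have the periodic shadowing property: there exists ε > 0 such that for every δ > 0 there is a periodic δ-pseudotrajectory of B_w starting and ending at 0 which is not contained in B(0, ε). -/
open Finset

/-- `ℓᵖ(ℤ)`. -/
abbrev LpZ (p : ENNReal) := lp (fun _ : ℤ => ℝ) p

/-- `c₀(ℤ)`. -/
abbrev C0Z := ZeroAtInftyContinuousMap ℤ ℝ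

section Defs

variable {X : Type*} [NormedAddCommGroup X] [NormedSpace ℝ X]

/-- `o : ℤ → X` is a full orbit of `T`. -/
def IsOrbit (T : X ≃L[ℝ] X) (o : ℤ → X) : Prop := ∀ j : ℤ, o (j + 1) = T (o j)

/-- `(x_j)_{j ∈ ℤ}` is a `δ`-pseudotrajectory of `T`. -/
def IsPT (T : X ≃L[ℝ] X) (δ : ℝ) (x : ℤ → X) : Prop :=
  ∀ j : ℤ, ‖T (x j) - x (j + 1)‖ < δ

/-- A sequence `x : ℤ → X` is periodic. -/
def IsPer (x : ℤ → X) : Prop := ∃ p : ℕ, 1 ≤ p ∧ ∀ j : ℤ, x (j + p) = x j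

/-- The shadowing property: every `δ`-pseudotrajectory is `ε`-shadowed by some full orbit. -/
def SP (T : X ≃L[ℝ] X) : Prop :=
  ∀ ε > (0 : ℝ), ∃ δ > (0 : ℝ), ∀ x : ℤ → X, IsPT T δ x →
    ∃ o : ℤ → X, IsOrbit T o ∧ ∀ j : ℤ, ‖x j - o j‖ < ε

/-- The periodic shadowing property: every periodic `δ`-pseudotrajectory is `ε`-shadowed
by (the orbit of) a periodic point. -/
def PSP (T : X ≃L[ℝ] X) : Prop :=
  ∀ ε > (0 : ℝ), ∃ δ > (0 : ℝ), ∀ x : ℤ → X, IsPT T δ x → IsPer x →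
    ∃ o : ℤ → X, IsOrbit T o ∧ IsPer o ∧ ∀ j : ℤ, ‖x j - o j‖ < ε

/-- `x` is a chain recurrent point of `T`: for every `δ > 0` there is a finite
`δ`-chain from `x` to `x`. -/
def ChainRec (T : X →L[ℝ] X) (x : X) : Prop :=
  ∀ δ > (0 : ℝ), ∃ (k : ℕ) (c : ℕ → X), 1 ≤ k ∧ c 0 = x ∧ c k = x ∧
    ∀ j < k, ‖T (c j) - c (j + 1)‖ < δ

/-- `T` has no nontrivial periodic point. -/
def OnlyTrivialPer (T : X →L[ℝ] X) : Prop :=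
  ∀ x : X, (∃ p : ℕ, 1 ≤ p ∧ (T ^ p) x = x) → x = 0

end Defs

noncomputable def amp (δ : ℝ) (N t : ℤ) : ℝ := δ / 2 * ((min t (N - t) : ℤ) : ℝ)

lemma amp_step (δ : ℝ) (hδ : 0 < δ) (N t : ℤ) (_ht : 0 ≤ t) (htN : t + 1 ≤ N) :
    |amp δ N t - amp δ N (t + 1)| ≤ δ / 2 := by
  have h1 : amp δ N t - amp δ N (t + 1)
      = δ / 2 * (((min t (N - t) - min (t + 1) (N - (t + 1))) : ℤ) : ℝ) := by
    unfold amp; push_cast; ring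
  have h2 : -1 ≤ min t (N - t) - min (t + 1) (N - (t + 1)) ∧
      min t (N - t) - min (t + 1) (N - (t + 1)) ≤ 1 := by omega
  obtain ⟨h2a, h2b⟩ := h2
  have h3 : |(((min t (N - t) - min (t + 1) (N - (t + 1))) : ℤ) : ℝ)| ≤ 1 := by
    rw [abs_le]
    exact ⟨by exact_mod_cast h2a, by exact_mod_cast h2b⟩
  rw [h1, abs_mul, abs_of_pos (by linarith : (0:ℝ) < δ / 2)]
  nlinarith [abs_nonneg (((min t (N - t) - min (t + 1) (N - (t + 1))) : ℤ) : ℝ)]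

lemma emod_succ (N j : ℤ) (hN : 0 < N) :
    (j + 1) % N = if j % N + 1 = N then 0 else j % N + 1 := by
  have h := Int.mul_ediv_add_emod j N
  have h0 := Int.emod_nonneg j (ne_of_gt hN)
  have h1 := Int.emod_lt_of_pos j hN
  by_cases hc : j % N + 1 = N
  · rw [if_pos hc]
    have hmul : N * (j / N + 1) = N * (j / N) + N := by ring
    have : j + 1 = N * (j / N + 1) := by omega
    rw [this, Int.mul_emod_right]
  · rw [if_neg hc]
    have e1 : j + 1 = (j % N + 1) + N * (j / N) := by omega
    rw [e1, Int.add_mul_emod_self_left, Int.emod_eq_of_lt (by omega) (by omega)]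

section Key
variable {X : Type*} [NormedAddCommGroup X] [NormedSpace ℝ X]

theorem key_not_psp
    (e : X → ℤ → ℝ)
    (he_inj : Function.Injective e)
    (he_sub : ∀ (x y : X) (n : ℤ), e (x - y) n = e x n - e y n)
    (he_le : ∀ (x : X) (n : ℤ), |e x n| ≤ ‖x‖)
    (s : ℤ → ℝ → X)
    (hs : ∀ (k : ℤ) (c : ℝ) (m : ℤ), e (s k c) m = if m = k then c else 0)
    (hsn : ∀ (k : ℤ) (c : ℝ), ‖s k c‖ ≤ |c|)
    (w : ℤ → ℝ)
    (hw : ∀ k : ℤ, w k = if 0 ≤ k then (1 / 2 : ℝ) else 1)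
    (T : X ≃L[ℝ] X)
    (hT : ∀ (x : X) (n : ℤ), e (T x) n = w (n + 1) * e x (n + 1)) :
    ¬ PSP T ∧
    ∃ ε > (0 : ℝ), ∀ δ > (0 : ℝ), ∃ x : ℤ → X,
      IsPT T δ x ∧ IsPer x ∧ (∃ j : ℤ, x j = 0) ∧ ∃ j : ℤ, ε ≤ ‖x j‖ := by
  have ezero : ∀ m : ℤ, e (0 : X) m = 0 := by
    intro m
    have h := he_sub 0 0 m
    rw [sub_zero] at h
    linarith
  have szero : ∀ k : ℤ, s k 0 = 0 := by
    intro k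
    apply he_inj
    funext m
    rw [hs, ezero]
    simp
  -- the construction
  have H : ∀ δ > (0 : ℝ), ∃ x : ℤ → X,
      IsPT T δ x ∧ IsPer x ∧ (∃ j : ℤ, x j = 0) ∧ ∃ j : ℤ, (1:ℝ) ≤ ‖x j‖ := by
    intro δ hδ
    obtain ⟨n0, hn0⟩ := exists_nat_ge (2 / δ)
    set n : ℕ := max n0 1 with hn
    have hn1 : 1 ≤ n := le_max_right _ _
    have hnδ : 2 / δ ≤ (n : ℝ) := le_trans hn0 (by exact_mod_cast Nat.cast_le.mpr (le_max_left _ _))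
    set N : ℤ := 2 * (n : ℤ) with hNdef
    have hN2 : 2 ≤ N := by omega
    have hNpos : 0 < N := by omega
    set r : ℤ → ℤ := fun j => j % N with hr
    have hr0 : ∀ j, 0 ≤ r j := fun j => Int.emod_nonneg j (by omega)
    have hrN : ∀ j, r j < N := fun j => Int.emod_lt_of_pos j hNpos
    set x : ℤ → X := fun j => s (-(r j)) (amp δ N (r j)) with hx
    have ampN : amp δ N N = 0 := by
      unfold amp
      have : min N (N - N) = 0 := by omega
      rw [this]; simp
    have amp0 : amp δ N 0 = 0 := by
      unfold amp
      have : min 0 (N - 0) = 0 := by omega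
      rw [this]; simp
    have amp1 : amp δ N 1 = δ / 2 := by
      unfold amp
      have : min 1 (N - 1) = 1 := by omega
      rw [this]; simp
    have hrsucc : ∀ j : ℤ, (r j + 1 < N ∧ r (j + 1) = r j + 1) ∨ (r j + 1 = N ∧ r (j + 1) = 0) := by
      intro j
      have h := emod_succ N j hNpos
      have h0 := hr0 j
      have h1 := hrN j
      simp only [hr] at *
      by_cases hc : j % N + 1 = N
      · right; exact ⟨hc, by rw [h, if_pos hc]⟩
      · left; exact ⟨by omega, by rw [h, if_neg hc]⟩
    -- key difference formula
    have hstep : ∀ j : ℤ, T (x j) - x (j + 1)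
        = s (-(r j + 1)) (w (-(r j)) * amp δ N (r j) - amp δ N (r j + 1)) := by
      intro j
      apply he_inj
      funext m
      have L1 : e (T (x j) - x (j + 1)) m
          = w (m + 1) * (if m + 1 = -(r j) then amp δ N (r j) else 0)
            - (if m = -(r (j + 1)) then amp δ N (r (j + 1)) else 0) := by
        rw [he_sub, hT]
        simp only [hx, hs]
      rw [L1, hs]
      rcases hrsucc j with ⟨h1, h2⟩ | ⟨h1, h2⟩
      · rw [h2]
        split_ifs with ha hb hb
        · rw [ha]
        · exact absurd (by omega : m = -(r j + 1)) hb
        · exact absurd (by omega : m + 1 = -(r j)) ha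
        · ring
      · rw [h2, amp0, ite_self,
          show amp δ N (r j + 1) = 0 from by rw [h1]; exact ampN]
        split_ifs with ha hb hb
        · rw [ha]
        · exact absurd (by omega : m = -(r j + 1)) hb
        · exact absurd (by omega : m + 1 = -(r j)) ha
        · ring
    have hab : ∀ t : ℤ, 0 ≤ t → t < N → |w (-t) * amp δ N t - amp δ N (t + 1)| ≤ δ / 2 := by
      intro t ht htN
      by_cases h0 : t = 0
      · subst h0
        rw [amp0, mul_zero, zero_sub, abs_neg]
        rw [show (0:ℤ) + 1 = 1 by ring, amp1]
        rw [abs_of_pos (by linarith)]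
      · have hw1 : w (-t) = 1 := by rw [hw, if_neg (by omega)]
        rw [hw1, one_mul]
        exact amp_step δ hδ N t ht (by omega)
    refine ⟨x, ?_, ?_, ?_, ?_⟩
    · intro j
      rw [hstep j]
      calc ‖s (-(r j + 1)) (w (-(r j)) * amp δ N (r j) - amp δ N (r j + 1))‖
          ≤ |w (-(r j)) * amp δ N (r j) - amp δ N (r j + 1)| := hsn _ _
        _ ≤ δ / 2 := hab _ (hr0 j) (hrN j)
        _ < δ := by linarith
    · refine ⟨2 * n, by omega, ?_⟩
      intro j
      have hrj : r (j + (2 * n : ℕ)) = r j := by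
        simp only [hr]
        have hcast : ((2 * n : ℕ) : ℤ) = N := by push_cast [hNdef]; ring
        rw [hcast, show j + N = j + N * 1 by ring, Int.add_mul_emod_self_left]
      simp only [hx, hrj]
    · refine ⟨0, ?_⟩
      have hr00 : r 0 = 0 := by simp [hr]
      simp only [hx, hr00, amp0, szero]
    · refine ⟨(n : ℤ), ?_⟩
      have hrn : r (n : ℤ) = n := by
        simp only [hr]
        exact Int.emod_eq_of_lt (by omega) (by omega)
      have hampn : amp δ N (n : ℤ) = δ / 2 * n := by
        unfold amp
        have hmin : min (n : ℤ) (N - n) = n := by omega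
        rw [hmin]
        norm_cast
      have h1 : (1:ℝ) ≤ δ / 2 * n := by
        have hδ' : 0 < δ / 2 := by linarith
        calc (1:ℝ) = δ / 2 * (2 / δ) := by field_simp
          _ ≤ δ / 2 * n := by nlinarith
      have h2 : e (x (n:ℤ)) (-(n:ℤ)) = amp δ N (n:ℤ) := by
        simp [hx, hrn, hs]
      calc (1:ℝ) ≤ δ / 2 * n := h1
        _ = amp δ N (n:ℤ) := hampn.symm
        _ ≤ |e (x (n:ℤ)) (-(n:ℤ))| := by rw [h2]; exact le_abs_self _
        _ ≤ ‖x (n:ℤ)‖ := he_le _ _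
  -- only trivial periodic points
  set F : X → X := fun v => T v with hF
  have hIt : ∀ (k : ℕ) (y : X) (m : ℤ),
      e (F^[k] y) m = (∏ i ∈ Finset.range k, w (m + i + 1)) * e y (m + k) := by
    intro k
    induction k with
    | zero => intro y m; simp
    | succ k ih =>
      intro y m
      have hTy : e (F y) (m + k) = w (m + k + 1) * e y (m + k + 1) := hT y (m + k)
      rw [Function.iterate_succ_apply, ih (F y) m, Finset.prod_range_succ, hTy,
        Nat.cast_add_one]
      rw [← add_assoc, mul_assoc]
  have hHalf : ∀ (m : ℤ), 0 ≤ m → ∀ k : ℕ,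
      (∏ i ∈ Finset.range k, w (m + i + 1)) = (1/2 : ℝ) ^ k := by
    intro m hm k
    rw [show ((1/2:ℝ) ^ k) = ∏ _i ∈ Finset.range k, (1/2:ℝ) from by
      rw [Finset.prod_const, Finset.card_range]]
    refine Finset.prod_congr rfl fun i _ => ?_
    rw [hw, if_pos (by positivity)]
  have Z : ∀ (q : ℕ), 1 ≤ q → ∀ y : X, F^[q] y = y → y = 0 := by
    intro q hq y hy
    have hfix : ∀ k : ℕ, F^[q * k] y = y := by
      intro k
      rw [Function.iterate_mul]
      exact Function.iterate_fixed hy k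
    have h0 : ∀ m : ℤ, 0 ≤ m → e y m = 0 := by
      intro m hm
      have key : ∀ k : ℕ, |e y m| ≤ ((1/2 : ℝ) ^ q) ^ k * ‖y‖ := by
        intro k
        have h1 := hIt (q * k) y m
        rw [hfix k, hHalf m hm] at h1
        have hp : (0:ℝ) < (1/2 : ℝ) ^ (q * k) := by positivity
        calc |e y m| = (1/2:ℝ) ^ (q*k) * |e y (m + (q*k : ℕ))| := by
              rw [h1, abs_mul, abs_of_pos hp]
          _ ≤ (1/2:ℝ) ^ (q*k) * ‖y‖ := by
              exact mul_le_mul_of_nonneg_left (he_le _ _) (le_of_lt hp)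
          _ = ((1/2:ℝ) ^ q) ^ k * ‖y‖ := by rw [pow_mul]
      have hlim : Filter.Tendsto (fun k : ℕ => ((1/2:ℝ) ^ q) ^ k * ‖y‖)
          Filter.atTop (nhds 0) := by
        have hlt : (1/2:ℝ) ^ q < 1 := pow_lt_one₀ (by norm_num) (by norm_num) (by omega)
        have := tendsto_pow_atTop_nhds_zero_of_lt_one (by positivity) hlt
        simpa using this.mul_const ‖y‖
      have hle0 : |e y m| ≤ 0 := ge_of_tendsto' hlim key
      have := abs_nonneg (e y m)
      have : |e y m| = 0 := le_antisymm hle0 this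
      exact abs_eq_zero.mp this
    have hall : ∀ m : ℤ, e y m = 0 := by
      intro m
      rcases le_or_gt 0 m with h | h
      · exact h0 m h
      · set k := m.natAbs with hk
        have hkm : (k : ℤ) = -m := by
          rw [hk]; omega
        have hk1 : 0 ≤ m + ((q * k : ℕ) : ℤ) := by
          have hqk : (k:ℤ) ≤ ((q * k : ℕ) : ℤ) := by
            push_cast
            nlinarith [(by exact_mod_cast hq : (1:ℤ) ≤ (q:ℤ)), Int.ofNat_nonneg k]
          omega
        have h1 := hIt (q * k) y m
        rw [hfix k] at h1
        rw [h1, h0 _ hk1, mul_zero]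
    apply he_inj
    funext m
    rw [hall m, ezero]
  constructor
  · intro hP
    obtain ⟨δ, hδ, hP'⟩ := hP 1 one_pos
    obtain ⟨x, hPT, hPer, _, j, hj⟩ := H δ hδ
    obtain ⟨o, ho, ⟨q, hq, hop⟩, hsh⟩ := hP' x hPT hPer
    have horb : ∀ (i : ℤ) (k : ℕ), o (i + k) = F^[k] (o i) := by
      intro i k
      induction k with
      | zero => simp
      | succ k ih =>
        have hcast : (i + ((k + 1 : ℕ) : ℤ)) = (i + (k : ℤ)) + 1 := by push_cast; ring
        rw [hcast, ho (i + (k : ℤ)), ih, Function.iterate_succ_apply']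
    have hfix : F^[q] (o j) = o j := by
      rw [← horb j q, hop j]
    have hoz : o j = 0 := Z q hq (o j) hfix
    have h2 := hsh j
    rw [hoz, sub_zero] at h2
    linarith
  · exact ⟨1, one_pos, H⟩
end Key

noncomputable def c0single (k : ℤ) (c : ℝ) : C0Z where
  toFun := fun m => if m = k then c else 0
  continuous_toFun := continuous_of_discreteTopology
  zero_at_infty' := by
    refine Filter.Tendsto.congr' ?_ tendsto_const_nhds
    filter_upwards [(isCompact_singleton : IsCompact ({k} : Set ℤ)).compl_mem_cocompact]
      with m hm
    have hmk : m ≠ k := by simpa using hm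
    simp [hmk]

lemma c0single_apply (k : ℤ) (c : ℝ) (m : ℤ) :
    c0single k c m = if m = k then c else 0 := rfl

lemma c0single_norm_le (k : ℤ) (c : ℝ) : ‖c0single k c‖ ≤ |c| := by
  rw [← ZeroAtInftyContinuousMap.norm_toBCF_eq_norm]
  refine (BoundedContinuousFunction.norm_le (abs_nonneg c)).mpr fun m => ?_
  show ‖c0single k c m‖ ≤ |c|
  rw [c0single_apply, Real.norm_eq_abs]
  by_cases h : m = k
  · rw [if_pos h]
  · rw [if_neg h]; simp [abs_nonneg]




/-- The bilateral weighted backward shift on `ℓᵖ(ℤ)` or `c₀(ℤ)` with weights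
`w k = 1/2` for `k ≥ 0` and `w k = 1` for `k < 0` does not have the periodic shadowing
property: there is `ε > 0` such that for every `δ > 0` there is a periodic
`δ`-pseudotrajectory starting (and ending) at `0` which is not contained in `B(0, ε)`. -/
theorem stmt14 (w : ℤ → ℝ)
    (hw : ∀ k : ℤ, w k = if 0 ≤ k then (1 / 2 : ℝ) else 1) :
    (∀ (p : ENNReal) [Fact (1 ≤ p)], p ≠ ⊤ →
      ∀ T : LpZ p ≃L[ℝ] LpZ p,
        (∀ (x : LpZ p) (n : ℤ), (T x) n = w (n + 1) * x (n + 1)) →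
        ¬ PSP T ∧
        ∃ ε > (0 : ℝ), ∀ δ > (0 : ℝ), ∃ x : ℤ → LpZ p,
          IsPT T δ x ∧ IsPer x ∧ (∃ j : ℤ, x j = 0) ∧ ∃ j : ℤ, ε ≤ ‖x j‖) ∧
    (∀ T : C0Z ≃L[ℝ] C0Z,
        (∀ (x : C0Z) (n : ℤ), (T x) n = w (n + 1) * x (n + 1)) →
        ¬ PSP T ∧
        ∃ ε > (0 : ℝ), ∀ δ > (0 : ℝ), ∃ x : ℤ → C0Z,
          IsPT T δ x ∧ IsPer x ∧ (∃ j : ℤ, x j = 0) ∧ ∃ j : ℤ, ε ≤ ‖x j‖) := by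
  constructor
  · intro p hp hptop T hT
    have hp1 : (1 : ENNReal) ≤ p := hp.out
    have hp0 : p ≠ 0 := by
      intro h
      rw [h] at hp1
      simp at hp1
    have hptr : 0 < p.toReal := ENNReal.toReal_pos hp0 hptop
    exact key_not_psp (fun f n => f n)
      (fun f g h => lp.ext h)
      (fun f g n => by simp [lp.coeFn_sub])
      (fun f n => by rw [← Real.norm_eq_abs]; exact lp.norm_apply_le_norm hp0 f n)
      (fun k c => lp.single p k c)
      (fun k c m => by
        rcases eq_or_ne m k with h | h
        · subst h
          rw [if_pos rfl]
          exact lp.single_apply_self (E := fun _ : ℤ => ℝ) p m c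
        · rw [if_neg h]
          exact lp.single_apply_ne (E := fun _ : ℤ => ℝ) p k c h)
      (fun k c => le_of_eq (by
        simpa [Real.norm_eq_abs] using lp.norm_single (E := fun _ : ℤ => ℝ) (pos_iff_ne_zero.mpr hp0) k c))
      w hw T hT
  · intro T hT
    exact key_not_psp (fun f n => f n)
      (fun f g h => DFunLike.coe_injective h)
      (fun f g n => by simp)
      (fun f n => by
        rw [← ZeroAtInftyContinuousMap.norm_toBCF_eq_norm, ← Real.norm_eq_abs]
        exact BoundedContinuousFunction.norm_coe_le_norm f.toBCF n)
      c0single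
      c0single_apply
      c0single_norm_le
      w hw T hT
end

section
/- Let B_w be a bilateral weighted backward shift on ℓp(ℤ) (1 ≤ p < ∞) or c0(ℤ) with bounded weights bounded away from zero and with no nontrivial periodic points. Then B_w has the periodic shadowing property if and only if: for every ε > 0 there is δ > 0 such that for all n ∈ ℕ and all y_1, …, y_n ∈ B(0, δ) with ∑_{i=0}^{n−1} B_w^{i+1} y_{n−i} ∈ B(0, δ), one has ∑_{i=0}^{k−1} B_w^i y_{k−i} ∈ B(0, ε) for all k ≤ n. -/
open Finset

section AuxKey

variable {X : Type*} [NormedAddCommGroup X] [NormedSpace ℝ X]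

lemma aux_orbit_pow (T : X ≃L[ℝ] X) {o : ℤ → X} (ho : IsOrbit T o) :
    ∀ (m : ℕ) (j : ℤ), o (j + m) = ((T : X →L[ℝ] X) ^ m) (o j) := by
  intro m
  induction m with
  | zero => simp
  | succ m ih =>
    intro j
    have h1 : (j + ((m : ℤ) + 1)) = (j + m) + 1 := by ring
    have h2 : ((m + 1 : ℕ) : ℤ) = (m : ℤ) + 1 := by push_cast; ring
    rw [h2, h1, ho, ih, pow_succ']
    simp

omit [NormedAddCommGroup X] [NormedSpace ℝ X] in
lemma aux_per_mul {x : ℤ → X} {p : ℕ} (hp : ∀ j : ℤ, x (j + p) = x j) :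
    ∀ (q : ℤ) (j : ℤ), x (j + q * p) = x j := by
  intro q
  induction q using Int.induction_on with
  | zero => simp
  | succ q ih =>
    intro j
    have h : j + ((q : ℤ) + 1) * p = (j + q * p) + p := by ring
    rw [h, hp, ih]
  | pred q ih =>
    intro j
    have h : j + (-(q : ℤ) - 1) * p = (j - p) + (-(q : ℤ)) * p := by ring
    rw [h, ih]
    have h2 := hp (j - p)
    have h3 : (j - (p : ℤ)) + p = j := by ring
    rw [h3] at h2
    exact h2.symm

lemma aux_periodic_orbit_zero (T : X ≃L[ℝ] X) (hT : OnlyTrivialPer (T : X →L[ℝ] X))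
    {o : ℤ → X} (ho : IsOrbit T o) (hper : IsPer o) : ∀ j, o j = 0 := by
  obtain ⟨p, hp1, hp⟩ := hper
  have h0 : o 0 = 0 := by
    apply hT
    refine ⟨p, hp1, ?_⟩
    have h1 := aux_orbit_pow T ho p 0
    rw [zero_add] at h1
    rw [← h1]
    simpa using hp 0
  intro j
  have hp1' : (1 : ℤ) ≤ (p : ℤ) := by exact_mod_cast hp1
  have hjnn : 0 ≤ j + (j.natAbs : ℤ) * p := by
    have h3 : (j.natAbs : ℤ) ≤ (j.natAbs : ℤ) * p :=
      le_mul_of_one_le_right (by positivity) hp1'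
    have h4 : -j ≤ (j.natAbs : ℤ) := by omega
    linarith
  have h2 : o j = o (j + (j.natAbs : ℤ) * p) := (aux_per_mul hp _ j).symm
  rw [h2]
  set m := (j + (j.natAbs : ℤ) * p).toNat with hm
  have h3 : j + (j.natAbs : ℤ) * p = (0 : ℤ) + m := by
    rw [zero_add, hm, Int.toNat_of_nonneg hjnn]
  rw [h3, aux_orbit_pow T ho m 0, h0]
  simp

lemma aux_sumrec (Tc : X →L[ℝ] X) (y : ℕ → X) (k : ℕ) :
    ∑ i ∈ Finset.range (k + 1), (Tc ^ i) (y (k + 1 - i)) =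
      Tc (∑ i ∈ Finset.range k, (Tc ^ i) (y (k - i))) + y (k + 1) := by
  rw [Finset.sum_range_succ', map_sum]
  congr 1
  apply Finset.sum_congr rfl
  intro i _
  have h1 : k + 1 - (i + 1) = k - i := by omega
  rw [h1, pow_succ']
  rfl

lemma aux_Tsum (Tc : X →L[ℝ] X) (y : ℕ → X) (n : ℕ) :
    ∑ i ∈ Finset.range n, (Tc ^ (i + 1)) (y (n - i)) =
      Tc (∑ i ∈ Finset.range n, (Tc ^ i) (y (n - i))) := by
  rw [map_sum]
  apply Finset.sum_congr rfl
  intro i _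
  rw [pow_succ']
  rfl

lemma aux_key (T : X ≃L[ℝ] X) (hT : OnlyTrivialPer (T : X →L[ℝ] X)) :
    PSP T ↔
      ∀ ε > (0 : ℝ), ∃ δ > (0 : ℝ), ∀ n : ℕ, 1 ≤ n → ∀ y : ℕ → X,
        (∀ i, 1 ≤ i → i ≤ n → ‖y i‖ < δ) →
        ‖∑ i ∈ Finset.range n, ((T : X →L[ℝ] X) ^ (i + 1)) (y (n - i))‖ < δ →
        ∀ k, 1 ≤ k → k ≤ n →
          ‖∑ i ∈ Finset.range k, ((T : X →L[ℝ] X) ^ i) (y (k - i))‖ < ε := by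
  set Tc : X →L[ℝ] X := (T : X →L[ℝ] X) with hTc
  constructor
  · -- PSP → finite-chain condition
    intro hPSP ε hε
    obtain ⟨δ, hδ, H⟩ := hPSP ε hε
    refine ⟨δ, hδ, ?_⟩
    intro n hn y hy hclose k hk1 hkn
    set xs : ℕ → X := fun k => ∑ i ∈ Finset.range k, (Tc ^ i) (y (k - i)) with hxs
    have hrec : ∀ m : ℕ, xs (m + 1) = Tc (xs m) + y (m + 1) := fun m => aux_sumrec Tc y m
    set z : ℤ → X := fun j => xs ((j % ((n : ℤ) + 1)).toNat) with hz
    have hnpos : (0 : ℤ) < (n : ℤ) + 1 := by positivity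
    have hmodfact : ∀ j : ℤ, 0 ≤ j % ((n : ℤ) + 1) ∧ j % ((n : ℤ) + 1) < (n : ℤ) + 1 :=
      fun j => ⟨Int.emod_nonneg j (by omega), Int.emod_lt_of_pos j hnpos⟩
    have hPT : IsPT T δ z := by
      intro j
      set q := j / ((n : ℤ) + 1) with hq
      set r := (j % ((n : ℤ) + 1)).toNat with hr
      have hrc : (r : ℤ) = j % ((n : ℤ) + 1) := Int.toNat_of_nonneg (hmodfact j).1
      have hrlt : r ≤ n := by
        have := (hmodfact j).2; omega
      have hjq : j = ((n : ℤ) + 1) * q + r := by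
        rw [hrc, hq]; exact (Int.mul_ediv_add_emod j _).symm
      have hzj : z j = xs r := rfl
      by_cases hcase : r < n
      · have hmod1 : (j + 1) % ((n : ℤ) + 1) = (r : ℤ) + 1 := by
          have h1 : j + 1 = ((r : ℤ) + 1) + ((n : ℤ) + 1) * q := by linear_combination hjq
          rw [h1, Int.add_mul_emod_self_left]
          exact Int.emod_eq_of_lt (by positivity) (by omega)
        have hz1 : z (j + 1) = xs (r + 1) := by
          have h2 : ((r : ℤ) + 1).toNat = r + 1 := by omega
          simp only [hz, hmod1, h2]
        rw [hzj, hz1, hrec r]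
        have h3 : T (xs r) - (Tc (xs r) + y (r + 1)) = -(y (r + 1)) := by
          simp [hTc]
        rw [h3, norm_neg]
        exact hy (r + 1) (by omega) (by omega)
      · have hrn : r = n := by omega
        have hmod0 : (j + 1) % ((n : ℤ) + 1) = 0 := by
          rw [hrn] at hjq
          have h1 : j + 1 = ((n : ℤ) + 1) * (q + 1) := by linear_combination hjq
          rw [h1, Int.mul_emod_right]
        have hz1 : z (j + 1) = xs 0 := by
          simp only [hz, hmod0, Int.toNat_zero]
        have hxs0 : xs 0 = 0 := by simp [hxs]
        rw [hzj, hz1, hxs0, hrn, sub_zero]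
        have hTx : T (xs n) = ∑ i ∈ Finset.range n, (Tc ^ (i + 1)) (y (n - i)) := by
          rw [aux_Tsum]; simp [hTc, hxs]
        rw [hTx]
        exact hclose
    have hPer : IsPer z := by
      refine ⟨n + 1, by omega, ?_⟩
      intro j
      have hper1 : (j + (((n : ℕ) + 1 : ℕ) : ℤ)) % ((n : ℤ) + 1) = j % ((n : ℤ) + 1) := by
        have h1 : j + (((n : ℕ) + 1 : ℕ) : ℤ) = j + ((n : ℤ) + 1) * 1 := by push_cast; ring
        rw [h1, Int.add_mul_emod_self_left]
      simp only [hz, hper1]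
    obtain ⟨o, ho, hop, hsh⟩ := H z hPT hPer
    have hzero := aux_periodic_orbit_zero T hT ho hop
    have hzk : z (k : ℤ) = xs k := by
      have h1 : ((k : ℤ) % ((n : ℤ) + 1)) = (k : ℤ) :=
        Int.emod_eq_of_lt (by positivity) (by omega)
      have h2 : ((k : ℤ)).toNat = k := by omega
      simp only [hz, h1, h2]
    have hfin := hsh (k : ℤ)
    rw [hzero, sub_zero, hzk] at hfin
    exact hfin
  · -- finite-chain condition → PSP
    intro hRHS ε hε
    obtain ⟨δ, hδ, H⟩ := hRHS ε hε
    refine ⟨δ / 2, by positivity, ?_⟩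
    intro x hx hper
    refine ⟨fun _ => 0, fun j => (map_zero T).symm, ⟨1, le_refl 1, fun j => rfl⟩, ?_⟩
    intro j0
    rw [sub_zero]
    obtain ⟨N, hN1, hNper⟩ := hper
    have hqper := aux_per_mul hNper
    set B : ℝ := (∑ r ∈ Finset.range N, ‖x (j0 + (r : ℤ))‖) + 1 with hB
    have hBpos : 1 ≤ B := by
      have : 0 ≤ ∑ r ∈ Finset.range N, ‖x (j0 + (r : ℤ))‖ :=
        Finset.sum_nonneg fun _ _ => norm_nonneg _
      linarith
    have hNpos : (0 : ℤ) < (N : ℤ) := by exact_mod_cast hN1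
    have hBbd : ∀ j : ℤ, ‖x j‖ ≤ B := by
      intro j
      set r := ((j - j0) % (N : ℤ)).toNat with hr
      have hrc : (r : ℤ) = (j - j0) % (N : ℤ) :=
        Int.toNat_of_nonneg (Int.emod_nonneg _ (by omega))
      have hrN : r < N := by
        have := Int.emod_lt_of_pos (j - j0) hNpos; omega
      have hxj : x j = x (j0 + (r : ℤ)) := by
        have h2 := Int.mul_ediv_add_emod (j - j0) (N : ℤ)
        rw [← hrc] at h2
        have h3 : (j0 + (r : ℤ)) + ((j - j0) / (N : ℤ)) * (N : ℤ) = j := by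
          rw [mul_comm]; linarith
        rw [← h3]
        exact hqper _ _
      rw [hxj]
      calc ‖x (j0 + (r : ℤ))‖
          ≤ ∑ i ∈ Finset.range N, ‖x (j0 + (i : ℤ))‖ :=
            Finset.single_le_sum (f := fun i : ℕ => ‖x (j0 + (i : ℤ))‖)
              (fun i _ => norm_nonneg _) (Finset.mem_range.mpr hrN)
        _ ≤ B := by rw [hB]; linarith
    obtain ⟨M0, hM0⟩ := exists_nat_gt (2 * B / δ)
    set L : ℕ := (M0 + 1) * N with hL
    have hL1 : 1 ≤ L := by
      rw [hL]; exact Nat.one_le_iff_ne_zero.mpr (by positivity)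
    have hLR : (2 * B / δ : ℝ) < L := by
      have h0 : M0 ≤ L := by rw [hL]; nlinarith [hN1]
      have h1 : (M0 : ℝ) ≤ L := by exact_mod_cast h0
      linarith
    have hLpos : (0 : ℝ) < L := by
      have : (1 : ℝ) ≤ L := by exact_mod_cast hL1
      linarith
    have hBL : B / L < δ / 2 := by
      rw [div_lt_iff₀ hLpos]
      rw [div_lt_iff₀ hδ] at hLR
      nlinarith
    set n : ℕ := 2 * L with hn
    set c : ℕ → ℝ := fun k => min (k : ℝ) ((n : ℝ) - k) / L with hc
    set z : ℕ → X := fun k => c k • x (j0 - (L : ℤ) + k) with hzdef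
    set y : ℕ → X := fun k => z k - T (z (k - 1)) with hy
    have hnL : (n : ℝ) = 2 * L := by rw [hn]; push_cast; ring
    have hc0 : c 0 = 0 := by
      simp only [hc]
      rw [Nat.cast_zero, sub_zero, min_eq_left (by positivity), zero_div]
    have hcL : c L = 1 := by
      simp only [hc, hnL]
      rw [show (2 : ℝ) * L - L = L by ring, min_self, div_self (by positivity)]
    have hcn : c n = 0 := by
      simp only [hc]
      rw [sub_self, min_eq_right (by positivity), zero_div]
    have hz0 : z 0 = 0 := by simp [hzdef, hc0]
    have hzn : z n = 0 := by simp [hzdef, hcn]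
    have hcbound : ∀ k, k ≤ n → 0 ≤ c k ∧ c k ≤ 1 := by
      intro k hk
      have hk' : (k : ℝ) ≤ n := by exact_mod_cast hk
      constructor
      · apply div_nonneg _ (le_of_lt hLpos)
        exact le_min (by positivity) (by linarith)
      · rw [div_le_one hLpos]
        have h1 : min (k : ℝ) ((n : ℝ) - k) ≤ (k : ℝ) := min_le_left _ _
        have h2 : min (k : ℝ) ((n : ℝ) - k) ≤ (n : ℝ) - k := min_le_right _ _
        linarith [hnL]
    have hcstep : ∀ k, |c (k + 1) - c k| ≤ 1 / L := by
      intro k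
      simp only [hc]
      push_cast
      rw [div_sub_div_same, abs_div, abs_of_pos hLpos]
      gcongr
      have h := abs_min_sub_min_le_max ((k : ℝ) + 1) ((n : ℝ) - ((k : ℝ) + 1))
        (k : ℝ) ((n : ℝ) - k)
      refine h.trans ?_
      rw [show ((k : ℝ) + 1 - (k : ℝ)) = 1 by ring,
        show (((n : ℝ) - ((k : ℝ) + 1)) - ((n : ℝ) - (k : ℝ))) = -1 by ring,
        abs_one, abs_neg, abs_one, max_self]
    have hyb : ∀ k, 1 ≤ k → k ≤ n → ‖y k‖ < δ := by
      intro k hk1 hkn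
      obtain ⟨m, rfl⟩ : ∃ m, k = m + 1 := ⟨k - 1, by omega⟩
      set a : ℤ := j0 - (L : ℤ) + m with ha
      have hidx : j0 - (L : ℤ) + ((m + 1 : ℕ) : ℤ) = a + 1 := by rw [ha]; push_cast; ring
      have hzm1 : z (m + 1) = c (m + 1) • x (a + 1) := by
        simp only [hzdef]
        rw [hidx]
      have hzm : z m = c m • x a := by
        simp only [hzdef, ha]
      have h1 : y (m + 1) = z (m + 1) - T (z m) := by
        simp only [hy, Nat.add_sub_cancel]
      have hym : y (m + 1) = c m • (x (a + 1) - T (x a)) + (c (m + 1) - c m) • x (a + 1) := by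
        rw [h1, hzm1, hzm, map_smul]
        module
      have hd : ‖x (a + 1) - T (x a)‖ < δ / 2 := by
        rw [norm_sub_rev]; exact hx a
      have hcm := hcbound m (by omega)
      have hstep := hcstep m
      rw [hym]
      calc ‖c m • (x (a + 1) - T (x a)) + (c (m + 1) - c m) • x (a + 1)‖
          ≤ ‖c m • (x (a + 1) - T (x a))‖ + ‖(c (m + 1) - c m) • x (a + 1)‖ := norm_add_le _ _
        _ = |c m| * ‖x (a + 1) - T (x a)‖ + |c (m + 1) - c m| * ‖x (a + 1)‖ := by
            rw [norm_smul, norm_smul, Real.norm_eq_abs, Real.norm_eq_abs]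
        _ ≤ 1 * (δ / 2) + (1 / L) * B := by
            have h1 : |c m| ≤ 1 := by rw [abs_of_nonneg hcm.1]; exact hcm.2
            have h2 : ‖x (a + 1)‖ ≤ B := hBbd _
            have h3 : (0 : ℝ) ≤ |c (m + 1) - c m| := abs_nonneg _
            have h4 : (0 : ℝ) ≤ ‖x (a + 1) - T (x a)‖ := norm_nonneg _
            have h5 : (0 : ℝ) ≤ B := by linarith
            nlinarith
        _ = δ / 2 + B / L := by ring
        _ < δ := by linarith
    have hzrec : ∀ k : ℕ, ∑ i ∈ Finset.range k, (Tc ^ i) (y (k - i)) = z k := by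
      intro k
      induction k with
      | zero => simp [hz0]
      | succ m ih =>
        rw [aux_sumrec Tc y m, ih]
        simp only [hy, Nat.add_sub_cancel, hTc, ContinuousLinearEquiv.coe_coe]
        abel
    have hclose : ‖∑ i ∈ Finset.range n, (Tc ^ (i + 1)) (y (n - i))‖ < δ := by
      rw [aux_Tsum, hzrec n, hzn]
      simpa using hδ
    have hfin := H n (by omega) y hyb hclose L hL1 (by omega)
    rw [hzrec L] at hfin
    have hzL : z L = x j0 := by
      simp only [hzdef, hcL]
      rw [show j0 - (L : ℤ) + (L : ℤ) = j0 by ring, one_smul]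
    rw [hzL] at hfin
    exact hfin

end AuxKey

/-- For an invertible bilateral weighted backward shift `B_w` on `ℓᵖ(ℤ)` (`1 ≤ p < ∞`)
or `c₀(ℤ)`, with weights bounded and bounded away from zero and no nontrivial periodic
points, the periodic shadowing property is equivalent to: for every `ε > 0` there is
`δ > 0` such that for all `n ≥ 1` and all `y_1, …, y_n ∈ B(0, δ)` with
`∑_{i=0}^{n−1} B_w^{i+1} y_{n−i} ∈ B(0, δ)`, one has
`∑_{i=0}^{k−1} B_w^i y_{k−i} ∈ B(0, ε)` for all `1 ≤ k ≤ n`. -/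
theorem stmt15 (w : ℤ → ℝ) (hbd : ∃ C : ℝ, ∀ n : ℤ, |w n| ≤ C)
    (hbelow : ∃ c > (0 : ℝ), ∀ n : ℤ, c ≤ |w n|) :
    (∀ (p : ENNReal) [Fact (1 ≤ p)], p ≠ ⊤ →
      ∀ T : LpZ p ≃L[ℝ] LpZ p,
        (∀ (x : LpZ p) (n : ℤ), (T x) n = w (n + 1) * x (n + 1)) →
        OnlyTrivialPer (T : LpZ p →L[ℝ] LpZ p) →
        (PSP T ↔
          ∀ ε > (0 : ℝ), ∃ δ > (0 : ℝ), ∀ n : ℕ, 1 ≤ n → ∀ y : ℕ → LpZ p,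
            (∀ i, 1 ≤ i → i ≤ n → ‖y i‖ < δ) →
            ‖∑ i ∈ Finset.range n, ((T : LpZ p →L[ℝ] LpZ p) ^ (i + 1)) (y (n - i))‖ < δ →
            ∀ k, 1 ≤ k → k ≤ n →
              ‖∑ i ∈ Finset.range k, ((T : LpZ p →L[ℝ] LpZ p) ^ i) (y (k - i))‖ < ε)) ∧
    (∀ T : C0Z ≃L[ℝ] C0Z,
        (∀ (x : C0Z) (n : ℤ), (T x) n = w (n + 1) * x (n + 1)) →
        OnlyTrivialPer (T : C0Z →L[ℝ] C0Z) →
        (PSP T ↔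
          ∀ ε > (0 : ℝ), ∃ δ > (0 : ℝ), ∀ n : ℕ, 1 ≤ n → ∀ y : ℕ → C0Z,
            (∀ i, 1 ≤ i → i ≤ n → ‖y i‖ < δ) →
            ‖∑ i ∈ Finset.range n, ((T : C0Z →L[ℝ] C0Z) ^ (i + 1)) (y (n - i))‖ < δ →
            ∀ k, 1 ≤ k → k ≤ n →
              ‖∑ i ∈ Finset.range k, ((T : C0Z →L[ℝ] C0Z) ^ i) (y (k - i))‖ < ε)) := by
  constructor
  · intro p _ _ T _ hT
    exact aux_key T hT
  · intro T _ hT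
    exact aux_key T hT
end

section
/- Let B_w be a bilateral weighted backward shift on ℓp(ℤ) (1 ≤ p < ∞) or c0(ℤ) with bounded weights bounded away from zero and with no nontrivial periodic points. If B_w has the periodic shadowing property, then for every ε > 0 there is δ > 0 such that for all integers k ≤ l ≤ m, at least one of: (a) |ε/(w(l+1)⋯w(m)) − δ ∑_{i=0}^{m−l−1} 1/(w(m)⋯w(m−i))| ≥ δ, or (b) |w(k)⋯w(l)·ε − δ ∑_{i=0}^{k−l+1} w(k)⋯w(k−i)| ≥ δ holds. -/
open Finset

/-- The weight condition: for every `ε > 0` there is `δ > 0` such that for all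
`k ≤ l ≤ m` one of
(a) `|ε/(w(l+1)⋯w(m)) − δ ∑_{i=0}^{m−l−1} 1/(w(m)⋯w(m−i))| ≥ δ`, or
(b) `|w(k)⋯w(l)·ε − δ ∑_{i=0}^{k−l+1} w(k)⋯w(k−i)| ≥ δ` holds. -/
def WCond (w : ℤ → ℝ) : Prop :=
  ∀ ε > (0 : ℝ), ∃ δ > (0 : ℝ), ∀ k l m : ℤ, k ≤ l → l ≤ m →
    (δ ≤ |ε / (∏ j ∈ Finset.range (m - l).toNat, w (l + 1 + j)) -
          δ * ∑ i ∈ Finset.range (m - l).toNat,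
                (∏ j ∈ Finset.range (i + 1), w (m - j))⁻¹|) ∨
    (δ ≤ |(∏ j ∈ Finset.range (l - k + 1).toNat, w (k + j)) * ε -
          δ * ∑ i ∈ Finset.range (k - l + 2).toNat,
                ∏ j ∈ Finset.range (i + 1), w (k - j)|)

private lemma prod_split (v : ℕ → ℝ) {i N : ℕ} (h : i < N) :
    (∏ j ∈ range N, v j) = (∏ j ∈ range (N-1-i), v j) * ∏ j ∈ range (i+1), v (N-1-j) := by
  have h1 : ∏ j ∈ range (i+1), v (N-1-j) = ∏ j ∈ range (i+1), v ((N-1-i)+j) := by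
    rw [← Finset.prod_range_reflect (fun j => v ((N-1-i)+j)) (i+1)]
    refine Finset.prod_congr rfl fun j hj => ?_
    simp only [Finset.mem_range] at hj
    congr 1
    omega
  rw [h1, ← Finset.prod_range_add, show (N-1-i)+(i+1) = N by omega]

private lemma sum_inv_eq (v : ℕ → ℝ) (hv : ∀ s, v s ≠ 0) (N : ℕ) :
    ∑ i ∈ range N, (∏ j ∈ range (i+1), v (N-1-j))⁻¹
      = (∑ r ∈ range N, ∏ j ∈ range r, v j) / (∏ j ∈ range N, v j) := by
  have hW : ∀ s : ℕ, (∏ j ∈ range s, v j) ≠ 0 :=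
    fun s => Finset.prod_ne_zero_iff.2 fun _ _ => hv _
  rw [eq_div_iff (hW N), Finset.sum_mul, ← Finset.sum_range_reflect (fun r => ∏ j ∈ range r, v j) N]
  refine Finset.sum_congr rfl fun i hi => ?_
  simp only [Finset.mem_range] at hi
  have hne : (∏ j ∈ range (i+1), v (N-1-j)) ≠ 0 :=
    Finset.prod_ne_zero_iff.2 fun _ _ => hv _
  rw [prod_split v hi]
  field_simp

set_option maxHeartbeats 1000000 in
theorem key {X : Type*} [NormedAddCommGroup X] [NormedSpace ℝ X]
    (w : ℤ → ℝ) (C : ℝ) (hC : 1 ≤ C) (hbd : ∀ n, |w n| ≤ C) (hnz : ∀ n, w n ≠ 0)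
    (T : X ≃L[ℝ] X) (e : ℤ → X) (he : ∀ n, ‖e n‖ = 1)
    (hTe : ∀ n, T (e n) = w n • e (n - 1))
    (hper : OnlyTrivialPer (T : X →L[ℝ] X)) (hpsp : PSP T) : WCond w := by
  intro ε hε
  obtain ⟨δ0, hδ0, hshad⟩ := hpsp ε hε
  have hC0 : (0:ℝ) < C := lt_of_lt_of_le one_pos hC
  -- every periodic δ0-pseudotrajectory stays in the ε-ball
  have hsmall : ∀ y : ℤ → X, IsPT T δ0 y → IsPer y → ‖y 0‖ < ε := by
    intro y h1 h2
    obtain ⟨o, horb, ⟨p, hp1, hop⟩, hcl⟩ := hshad y h1 h2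
    have hiter : ∀ n : ℕ, o (n : ℤ) = (((T : X →L[ℝ] X)) ^ n) (o 0) := by
      intro n
      induction n with
      | zero => simp
      | succ n ih =>
        rw [show (((n+1:ℕ)):ℤ) = (n:ℤ)+1 by push_cast; ring, horb, ih, pow_succ']
        simp [ContinuousLinearMap.mul_apply]
    have ho0 : o 0 = 0 := by
      refine hper (o 0) ⟨p, hp1, ?_⟩
      rw [← hiter p]
      simpa using hop 0
    have := hcl 0
    rwa [ho0, sub_zero] at this
  refine ⟨δ0 / (1 + 2*C^2), by positivity, ?_⟩
  set δ : ℝ := δ0 / (1 + 2*C^2) with hδdef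
  have hδpos : 0 < δ := by positivity
  have hδδ0 : δ * (1 + 2*C^2) = δ0 := by
    rw [hδdef]
    exact div_mul_cancel₀ δ0 (by positivity)
  intro k l m hkl hlm
  by_contra hcon
  push_neg at hcon
  obtain ⟨hA, hB⟩ := hcon
  set N : ℕ := (m - l).toNat with hN
  set M : ℕ := (l - k).toNat with hM
  have hmN : m = l + N := by omega
  have hkM : k = l - M := by omega
  set v : ℕ → ℝ := fun s => w (l+1+s) with hv
  set q : ℕ → ℝ := fun s => w (l - s) with hq
  have hWnz : ∀ s : ℕ, (∏ j ∈ range s, v j) ≠ 0 :=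
    fun s => Finset.prod_ne_zero_iff.2 fun _ _ => hnz _
  set aa : ℕ → ℝ := fun s => (ε - δ * ∑ r ∈ range s, ∏ j ∈ range r, v j) / ∏ j ∈ range s, v j
    with haa
  set Qf : ℕ → ℝ := fun t => ∏ s ∈ range t, q s with hQf
  set Rv : ℝ := ∑ i ∈ Finset.range (k - l + 2).toNat,
                ∏ j ∈ Finset.range (i + 1), w (k - j) with hRv
  set Bv : ℝ := (∏ j ∈ Finset.range (l - k + 1).toNat, w (k + j)) * ε - δ * Rv with hBv
  -- aa N equals the quantity in condition (a)
  have haaA : aa N = ε / (∏ j ∈ Finset.range (m - l).toNat, w (l + 1 + j)) -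
          δ * ∑ i ∈ Finset.range (m - l).toNat,
                (∏ j ∈ Finset.range (i + 1), w (m - j))⁻¹ := by
    have h1 : ∑ i ∈ Finset.range N, (∏ j ∈ Finset.range (i + 1), w (m - j))⁻¹
        = ∑ i ∈ range N, (∏ j ∈ range (i+1), v (N-1-j))⁻¹ := by
      refine Finset.sum_congr rfl fun i hi => ?_
      simp only [Finset.mem_range] at hi
      congr 1
      refine Finset.prod_congr rfl fun j hj => ?_
      simp only [Finset.mem_range] at hj
      simp only [hv]
      congr 1
      omega
    rw [show (m - l).toNat = N from rfl, h1, sum_inv_eq v (fun s => hnz _) N, haa]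
    simp only [hv]
    rw [sub_div, mul_div_assoc]
  have hA' : |aa N| < δ := by rw [haaA]; exact hA
  have haa0 : aa 0 = ε := by simp [haa]
  have haarec : ∀ s : ℕ, v s * aa (s+1) = aa s - δ := by
    intro s
    have h1 : (∏ j ∈ range (s+1), v j) = (∏ j ∈ range s, v j) * v s :=
      Finset.prod_range_succ v s
    have h2 : ∑ r ∈ range (s+1), ∏ j ∈ range r, v j
        = (∑ r ∈ range s, ∏ j ∈ range r, v j) + ∏ j ∈ range s, v j :=
      Finset.sum_range_succ _ s
    have hvs : v s ≠ 0 := hnz _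
    have hWs := hWnz s
    rw [haa]
    simp only [h1, h2]
    field_simp
    ring
  -- Qf (M+1) equals the product in condition (b)
  have hQB : (∏ j ∈ Finset.range (l - k + 1).toNat, w (k + j)) = Qf (M+1) := by
    rw [show (l - k + 1).toNat = M + 1 by omega, hQf,
      ← Finset.prod_range_reflect (fun j => w (k + j)) (M+1)]
    refine Finset.prod_congr rfl fun j hj => ?_
    simp only [Finset.mem_range] at hj
    simp only [hq]
    congr 1
    omega
  have hRbd : |Rv| ≤ C + C^2 := by
    have h2 : (k - l + 2).toNat = 0 ∨ (k - l + 2).toNat = 1 ∨ (k - l + 2).toNat = 2 := by omega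
    rw [hRv]
    rcases h2 with h2 | h2 | h2 <;> rw [h2]
    · simp only [Finset.range_zero, Finset.sum_empty, abs_zero]
      positivity
    · rw [Finset.sum_range_one, Finset.prod_range_one]
      norm_num
      have := hbd k
      nlinarith [sq_nonneg C]
    · rw [Finset.sum_range_succ, Finset.sum_range_one, Finset.prod_range_one,
        Finset.prod_range_succ, Finset.prod_range_one]
      norm_num
      have h3 := hbd k
      have h4 := hbd (k - 1)
      have h5 := abs_nonneg (w k)
      have h6 := abs_nonneg (w (k-1))
      have h7 : |w k + w k * w (k-1)| ≤ |w k| + |w k| * |w (k-1)| := by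
        rw [← abs_mul]; exact abs_add_le _ _
      nlinarith
  -- the periodic pseudotrajectory
  set P : ℤ := (N:ℤ) + M + 3 with hP
  have hPpos : (0:ℤ) < P := by omega
  set ρ : ℤ → ℤ := fun j => (j + ((N:ℤ)+1)) % P - ((N:ℤ)+1) with hρ
  have hρlb : ∀ j, -((N:ℤ)+1) ≤ ρ j := by
    intro j
    have := Int.emod_nonneg (j + ((N:ℤ)+1)) (ne_of_gt hPpos)
    simp only [hρ]
    omega
  have hρub : ∀ j, ρ j ≤ (M:ℤ) + 1 := by
    intro j
    have := Int.emod_lt_of_pos (j + ((N:ℤ)+1)) hPpos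
    simp only [hρ]
    omega
  have hρsucc : ∀ j, (ρ j = (M:ℤ)+1 ∧ ρ (j+1) = -((N:ℤ)+1)) ∨
      (ρ j < (M:ℤ)+1 ∧ ρ (j+1) = ρ j + 1) := by
    intro j
    have h0 := Int.emod_nonneg (j + ((N:ℤ)+1)) (ne_of_gt hPpos)
    have h1 := Int.emod_lt_of_pos (j + ((N:ℤ)+1)) hPpos
    have e1 : (j + 1 + ((N:ℤ)+1)) % P = ((j + ((N:ℤ)+1)) % P + 1) % P := by
      conv_lhs => rw [show j + 1 + ((N:ℤ)+1) = (j + ((N:ℤ)+1)) + 1 by ring]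
      have hone : (1:ℤ) % P = 1 := Int.emod_eq_of_lt (by norm_num) (by omega)
      rw [Int.add_emod, hone]
    by_cases hc : (j + ((N:ℤ)+1)) % P = P - 1
    · left
      have e2 : ((j + ((N:ℤ)+1)) % P + 1) % P = 0 := by
        rw [hc, show P - 1 + 1 = P by ring, Int.emod_self]
      constructor
      · simp only [hρ]; omega
      · simp only [hρ, e1, e2]; omega
    · right
      have e2 : ((j + ((N:ℤ)+1)) % P + 1) % P = (j + ((N:ℤ)+1)) % P + 1 :=
        Int.emod_eq_of_lt (by omega) (by omega)
      constructor
      · simp only [hρ]; omega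
      · simp only [hρ, e1, e2]; omega
  have hρper : ∀ j, ρ (j + P) = ρ j := by
    intro j
    simp only [hρ]
    rw [show j + P + ((N:ℤ)+1) = (j + ((N:ℤ)+1)) + P * 1 by ring, Int.add_mul_emod_self_left]
  have hρ0 : ρ 0 = 0 := by
    have h3 : ((0:ℤ) + ((N:ℤ)+1)) % P = 0 + ((N:ℤ)+1) := Int.emod_eq_of_lt (by omega) (by omega)
    simp only [hρ, h3]
    ring
  set u : ℤ → ℝ := fun t => if t < 0 then (if t = -((N:ℤ)+1) then 0 else aa (-t).toNat)
      else (if t ≤ (M:ℤ) then Qf t.toNat * ε else Bv) with hu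
  set x : ℤ → X := fun j => u (ρ j) • e (l - ρ j) with hx
  have hu0 : u (-((N:ℤ)+1)) = 0 := by
    simp only [hu]
    rw [if_pos (show -((N:ℤ)+1) < 0 by omega)]
    simp
  -- x is periodic
  have hxper : IsPer x := by
    refine ⟨N + M + 3, by omega, fun j => ?_⟩
    have : ρ (j + ((N + M + 3 : ℕ) : ℤ)) = ρ j := by
      rw [show ((N + M + 3 : ℕ) : ℤ) = P by push_cast [hP]; ring, hρper]
    simp only [hx, this]
  have hTx : ∀ j, T (x j) = (u (ρ j) * w (l - ρ j)) • e (l - ρ j - 1) := by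
    intro j
    simp only [hx, map_smul, hTe, smul_smul]
  -- u at the ends
  have hq1 : (0:ℝ) < 1 - C + 2*C^2 := by nlinarith [sq_nonneg (C-1), hC0]
  have hq2 : (0:ℝ) < 1 - C + C^2 := by nlinarith [sq_nonneg (2*C-1)]
  have hδC : δ * C < δ0 := by nlinarith [mul_pos hδpos hq1]
  have hδlt : δ < δ0 := by nlinarith [mul_pos hδpos (mul_pos hC0 hC0)]
  have hδCC : δ * (C + C^2) < δ0 := by nlinarith [mul_pos hδpos hq2]
  have huA : u (-(N:ℤ)) = aa N := by
    rcases Nat.eq_zero_or_pos N with h | h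
    · rw [show -((N:ℤ)) = 0 by omega]
      simp only [hu]
      rw [if_neg (show ¬(0:ℤ) < 0 by omega), if_pos (show (0:ℤ) ≤ (M:ℤ) by omega), h, haa0]
      simp [hQf]
    · simp only [hu]
      rw [if_pos (show -((N:ℤ)) < 0 by omega), if_neg (show ¬-((N:ℤ)) = -((N:ℤ)+1) by omega)]
      congr 1
      omega
  have huB : u ((M:ℤ)+1) = Bv := by
    simp only [hu]
    rw [if_neg (by omega), if_neg (by omega)]
  -- x is a δ0-pseudotrajectory
  have hpt : IsPT T δ0 x := by
    intro j
    rcases hρsucc j with ⟨h1, h2⟩ | ⟨h1, h2⟩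
    · -- wrap-around step
      have hx1 : x (j+1) = 0 := by
        simp only [hx, h2, hu0, zero_smul]
      rw [hTx, hx1, sub_zero, norm_smul, h1, huB, he, mul_one]
      have hw := hbd (l - ((M:ℤ)+1))
      have habs : |Bv * w (l - ((M:ℤ)+1))| ≤ |Bv| * C := by
        rw [abs_mul]
        exact mul_le_mul_of_nonneg_left hw (abs_nonneg _)
      calc ‖Bv * w (l - ((M:ℤ)+1))‖ = |Bv * w (l - ((M:ℤ)+1))| := rfl
        _ ≤ |Bv| * C := habs
        _ < δ * C := by
            exact mul_lt_mul_of_pos_right hB hC0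
        _ < δ0 := hδC
    · -- regular step
      set t : ℤ := ρ j with ht
      have hdiff : T (x j) - x (j+1) = (u t * w (l - t) - u (t+1)) • e (l - t - 1) := by
        rw [hTx j]
        simp only [hx, h2, ← ht]
        rw [show l - (t + 1) = l - t - 1 by ring, sub_smul]
      rw [hdiff, norm_smul, he, mul_one]
      have hlbt := hρlb j
      rcases lt_or_ge t 0 with htneg | htnn
      · -- t < 0
        by_cases hteq : t = -((N:ℤ)+1)
        · -- closing step on the left: error |aa N| < δ
          have hut : u t = 0 := by simp only [hu]; rw [if_pos htneg, if_pos hteq]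
          have hut1 : u (t+1) = aa N := by rw [hteq, show -((N:ℤ)+1) + 1 = -(N:ℤ) by ring, huA]
          rw [hut, hut1, zero_mul, zero_sub, norm_neg]
          calc ‖aa N‖ = |aa N| := rfl
            _ < δ := hA'
            _ < δ0 := hδlt
        · -- interior left step: error exactly δ
          have hsN : 1 ≤ (-t).toNat ∧ (-t).toNat ≤ N := by
            constructor <;> omega
          set s : ℕ := (-t).toNat with hs
          have hut : u t = aa s := by
            simp only [hu]; rw [if_pos htneg, if_neg hteq]
          have hut1 : u (t+1) = aa (s-1) := by
            rcases eq_or_lt_of_le hsN.1 with h | h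
            · have ht1 : t + 1 = 0 := by omega
              rw [ht1]
              simp only [hu]
              rw [if_neg (show ¬(0:ℤ) < 0 by omega), if_pos (show (0:ℤ) ≤ (M:ℤ) by omega),
                show s - 1 = 0 by omega, haa0]
              simp [hQf]
            · simp only [hu]
              rw [if_pos (show t + 1 < 0 by omega), if_neg (show ¬t + 1 = -((N:ℤ)+1) by omega)]
              congr 1
              omega
          have hrec := haarec (s-1)
          have hvs : v (s-1) = w (l - t) := by
            simp only [hv]
            congr 1
            omega
          have hss : s - 1 + 1 = s := by omega
          rw [hss, hvs] at hrec
          rw [hut, hut1, mul_comm, hrec]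
          have : aa (s-1) - δ - aa (s-1) = -δ := by ring
          rw [this, norm_neg]
          calc ‖δ‖ = |δ| := rfl
            _ = δ := abs_of_pos hδpos
            _ < δ0 := hδlt
      · -- forward steps: 0 ≤ t
        have hut : u t = Qf t.toNat * ε := by
          simp only [hu]
          rw [if_neg (show ¬ t < 0 by omega), if_pos (show t ≤ (M:ℤ) by omega)]
        by_cases htM : t = (M:ℤ)
        · -- the step from coordinate k to the closing value Bv
          have hut1 : u (t+1) = Bv := by rw [htM, huB]
          have hqM : w (l - t) = q t.toNat := by
            simp only [hq]
            congr 1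
            omega
          have htNat : (t.toNat : ℕ) = M := by omega
          have hcoef : Qf t.toNat * ε * w (l - t) - Bv = δ * Rv := by
            rw [hqM, htNat, hBv, hQB,
              show Qf (M+1) = Qf M * q M from Finset.prod_range_succ q M]
            ring
          rw [hut, hut1, hcoef, Real.norm_eq_abs, abs_mul, abs_of_pos hδpos]
          calc δ * |Rv| ≤ δ * (C + C^2) := mul_le_mul_of_nonneg_left hRbd (le_of_lt hδpos)
            _ < δ0 := hδCC
        · -- interior forward step: exact orbit, zero error
          have hut1 : u (t+1) = Qf (t.toNat + 1) * ε := by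
            simp only [hu]
            rw [if_neg (show ¬ t+1 < 0 by omega), if_pos (show t+1 ≤ (M:ℤ) by omega),
              show ((t+1)).toNat = t.toNat + 1 by omega]
          have hqt : w (l - t) = q t.toNat := by
            simp only [hq]
            congr 1
            omega
          have hc0 : Qf t.toNat * ε * w (l - t) - Qf (t.toNat + 1) * ε = 0 := by
            rw [hqt, show Qf (t.toNat + 1) = Qf t.toNat * q t.toNat from
              Finset.prod_range_succ q t.toNat]
            ring
          rw [hut, hut1, hc0, norm_zero]
          exact hδ0
  -- conclude: x 0 has norm ε but must have norm < ε
  have hx0 : ‖x 0‖ = ε := by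
    have hu00 : u 0 = ε := by
      simp only [hu]
      rw [if_neg (show ¬(0:ℤ) < 0 by omega), if_pos (show (0:ℤ) ≤ (M:ℤ) by omega)]
      simp [hQf]
    simp only [hx, hρ0, hu00]
    rw [norm_smul, he, Real.norm_eq_abs, abs_of_pos hε, mul_one]
  have hlt := hsmall x hpt hxper
  rw [hx0] at hlt
  exact lt_irrefl _ hlt

/-- The canonical "basis vector" in `c₀(ℤ)`. -/
def c0e (n : ℤ) : C0Z where
  toFun := fun m => if m = n then (1:ℝ) else 0
  continuous_toFun := continuous_of_discreteTopology
  zero_at_infty' := by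
    refine Filter.Tendsto.congr' ?_ tendsto_const_nhds
    have hmem : ({n}ᶜ : Set ℤ) ∈ Filter.cocompact ℤ :=
      Filter.mem_cocompact.mpr ⟨{n}, isCompact_singleton, subset_rfl⟩
    filter_upwards [hmem] with a ha
    simp only [Set.mem_compl_iff, Set.mem_singleton_iff] at ha
    simp [ha]

lemma c0e_apply (n m : ℤ) : c0e n m = if m = n then (1:ℝ) else 0 := rfl

lemma c0e_norm (n : ℤ) : ‖c0e n‖ = 1 := by
  rw [← ZeroAtInftyContinuousMap.norm_toBCF_eq_norm]
  apply le_antisymm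
  · refine (BoundedContinuousFunction.norm_le zero_le_one).2 fun x => ?_
    rw [ZeroAtInftyContinuousMap.toBCF_apply, c0e_apply]
    split_ifs <;> norm_num
  · have h := (c0e n).toBCF.norm_coe_le_norm n
    rw [ZeroAtInftyContinuousMap.toBCF_apply, c0e_apply] at h
    simpa using h


/-- If an invertible bilateral weighted backward shift on `ℓᵖ(ℤ)` (`1 ≤ p < ∞`) or
`c₀(ℤ)`, with weights bounded and bounded away from zero and no nontrivial periodic
points, has the periodic shadowing property, then the weight condition holds. -/
theorem stmt16 (w : ℤ → ℝ) (hbd : ∃ C : ℝ, ∀ n : ℤ, |w n| ≤ C)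
    (hbelow : ∃ c > (0 : ℝ), ∀ n : ℤ, c ≤ |w n|) :
    (∀ (p : ENNReal) [Fact (1 ≤ p)], p ≠ ⊤ →
      ∀ T : LpZ p ≃L[ℝ] LpZ p,
        (∀ (x : LpZ p) (n : ℤ), (T x) n = w (n + 1) * x (n + 1)) →
        OnlyTrivialPer (T : LpZ p →L[ℝ] LpZ p) → PSP T → WCond w) ∧
    (∀ T : C0Z ≃L[ℝ] C0Z,
        (∀ (x : C0Z) (n : ℤ), (T x) n = w (n + 1) * x (n + 1)) →
        OnlyTrivialPer (T : C0Z →L[ℝ] C0Z) → PSP T → WCond w) := by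
  obtain ⟨C0, hC0⟩ := hbd
  obtain ⟨c, hc, hcw⟩ := hbelow
  have hnz : ∀ n : ℤ, w n ≠ 0 := by
    intro n h
    have := hcw n
    rw [h, abs_zero] at this
    linarith
  have hC : (1:ℝ) ≤ max C0 1 := le_max_right _ _
  have hbd' : ∀ n : ℤ, |w n| ≤ max C0 1 := fun n => le_trans (hC0 n) (le_max_left _ _)
  constructor
  · intro p hfact hptop T hTx hper hpsp
    have hp1 : (1:ENNReal) ≤ p := Fact.out
    have hppos : 0 < p.toReal := by
      refine ENNReal.toReal_pos ?_ hptop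
      intro h
      rw [h] at hp1
      exact absurd hp1 (by simp)
    set en : ℤ → LpZ p := fun n => lp.single p n (1:ℝ) with hen
    have he : ∀ n, ‖en n‖ = 1 := by
      intro n
      simpa using lp.norm_single (E := fun _ : ℤ => ℝ) (p := p) (lt_of_lt_of_le zero_lt_one hp1) n (1:ℝ)
    have hTe : ∀ n, T (en n) = w n • en (n - 1) := by
      intro n
      apply lp.ext
      funext j
      have hL : (T (en n)) j = w (j + 1) * (en n) (j + 1) := hTx (en n) j
      have hR : ((w n • en (n - 1)) : LpZ p) j = w n * (en (n - 1)) j := by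
        rw [lp.coeFn_smul]
        rfl
      rw [hL, hR]
      by_cases hj : j = n - 1
      · rw [hj, show n - 1 + 1 = n by ring, lp.single_apply_self, lp.single_apply_self]
      · rw [lp.single_apply_ne p n _ (show j + 1 ≠ n by omega),
          lp.single_apply_ne p (n-1) _ hj]
        ring
    exact key w (max C0 1) hC hbd' hnz T en he hTe hper hpsp
  · intro T hTx hper hpsp
    have hTe : ∀ n, T (c0e n) = w n • c0e (n - 1) := by
      intro n
      apply ZeroAtInftyContinuousMap.ext
      intro j
      have hL : (T (c0e n)) j = w (j + 1) * (c0e n) (j + 1) := hTx (c0e n) j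
      have hR : ((w n • c0e (n - 1)) : C0Z) j = w n * (c0e (n - 1)) j := rfl
      rw [hL, hR, c0e_apply, c0e_apply]
      by_cases hj : j = n - 1
      · rw [if_pos (show j + 1 = n by omega), if_pos hj, show j + 1 = n by omega]
      · rw [if_neg (show ¬ j + 1 = n by omega), if_neg hj]
        ring
    exact key w (max C0 1) hC hbd' hnz T c0e c0e_norm hTe hper hpsp
end
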